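/- Let T > 0 and let a, b, c : ℝ → ℝ be continuous and T-periodic. Suppose z₁, z₂, z₃ : ℝ → ℝ are differentiable solutions of the Riccati equation z'(s) = a(s)z(s)² + b(s)z(s) + c(s), defined on all of ℝ, which are T-periodic and whose values are pairwise distinct at every s ∈ ℝ. Then every differentiable solution z : ℝ → ℝ of the same equation defined on all of ℝ is T-periodic. In particular, a periodic Riccati equation has at most two isolated periodic solutions. -/

import Mathlib

/-- Solutions of a linear ODE `g' = φ g` are exponentials. -/
lemma linODE (g φ : ℝ → ℝ) (hφ : Continuous φ)
    (hg : ∀ s, HasDerivAt g (φ s * g s) s) :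
    ∀ s, g s = g 0 * Real.exp (∫ t in (0:ℝ)..s, φ t) := by
  set F : ℝ → ℝ := fun s => ∫ t in (0:ℝ)..s, φ t with hFdef
  have hF : ∀ s, HasDerivAt F (φ s) s := fun s =>
    (hφ.integral_hasStrictDerivAt 0 s).hasDerivAt
  have hh : ∀ s, HasDerivAt (fun s => g s * Real.exp (-F s)) 0 s := by
    intro s
    have h1 : HasDerivAt (fun s => Real.exp (-F s)) (Real.exp (-F s) * (-φ s)) s :=
      ((hF s).neg).exp
    have := (hg s).mul h1
    refine this.congr_deriv ?_
    ring
  have hconst : ∀ s, g s * Real.exp (-F s) = g 0 * Real.exp (-F 0) :=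
    fun s => is_const_of_deriv_eq_zero (fun x => (hh x).differentiableAt)
      (fun x => (hh x).deriv) s 0
  intro s
  have h0 : F 0 = 0 := by simp [hFdef]
  have hs := hconst s
  rw [h0] at hs
  simp only [neg_zero, Real.exp_zero, mul_one] at hs
  rw [← hs, Real.exp_neg, mul_assoc, inv_mul_cancel₀ (Real.exp_ne_zero _), mul_one]

/-- Two Riccati solutions agreeing at a point agree everywhere. -/
lemma riccati_unique (a b c : ℝ → ℝ) (ha : Continuous a) (hb : Continuous b)
    (z w : ℝ → ℝ)
    (hz : ∀ s, HasDerivAt z (a s * z s ^ 2 + b s * z s + c s) s)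
    (hw : ∀ s, HasDerivAt w (a s * w s ^ 2 + b s * w s + c s) s)
    (s₀ : ℝ) (h : z s₀ = w s₀) : ∀ s, z s = w s := by
  have hzc : Continuous z := Differentiable.continuous fun s => (hz s).differentiableAt
  have hwc : Continuous w := Differentiable.continuous fun s => (hw s).differentiableAt
  set φ : ℝ → ℝ := fun s => a s * (z s + w s) + b s with hφdef
  have hφ : Continuous φ := (ha.mul (hzc.add hwc)).add hb
  have hg : ∀ s, HasDerivAt (fun s => z s - w s) (φ s * (z s - w s)) s := by
    intro s
    have := (hz s).sub (hw s)
    refine this.congr_deriv ?_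
    simp only [hφdef]
    ring
  have key := linODE _ φ hφ hg
  have h0 : z s₀ - w s₀ = 0 := by rw [h]; ring
  rw [key s₀] at h0
  have hz0 : z 0 - w 0 = 0 := by
    rcases mul_eq_zero.1 h0 with h' | h'
    · exact h'
    · exact absurd h' (Real.exp_ne_zero _)
  intro s
  have := key s
  rw [hz0, zero_mul] at this
  linarith [this]

theorem riccati_three_periodic_implies_all_periodic
    (T : ℝ) (hT : 0 < T)
    (a b c : ℝ → ℝ)
    (ha : Continuous a) (hb : Continuous b) (hc : Continuous c)
    (haT : ∀ s, a (s + T) = a s) (hbT : ∀ s, b (s + T) = b s)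
    (hcT : ∀ s, c (s + T) = c s)
    (z₁ z₂ z₃ : ℝ → ℝ)
    (hz₁ : ∀ s, HasDerivAt z₁ (a s * z₁ s ^ 2 + b s * z₁ s + c s) s)
    (hz₂ : ∀ s, HasDerivAt z₂ (a s * z₂ s ^ 2 + b s * z₂ s + c s) s)
    (hz₃ : ∀ s, HasDerivAt z₃ (a s * z₃ s ^ 2 + b s * z₃ s + c s) s)
    (hz₁T : ∀ s, z₁ (s + T) = z₁ s) (hz₂T : ∀ s, z₂ (s + T) = z₂ s)
    (hz₃T : ∀ s, z₃ (s + T) = z₃ s)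
    (hdist : ∀ s, z₁ s ≠ z₂ s ∧ z₁ s ≠ z₃ s ∧ z₂ s ≠ z₃ s) :
    ∀ z : ℝ → ℝ, (∀ s, HasDerivAt z (a s * z s ^ 2 + b s * z s + c s) s) →
      ∀ s, z (s + T) = z s := by
  intro z hz
  -- Case: z coincides with one of the three periodic solutions somewhere.
  by_cases h1 : ∃ s₀, z s₀ = z₁ s₀
  · obtain ⟨s₀, hs₀⟩ := h1
    have := riccati_unique a b c ha hb z z₁ hz hz₁ s₀ hs₀
    intro s; rw [this (s + T), this s, hz₁T s]
  by_cases h2 : ∃ s₀, z s₀ = z₂ s₀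
  · obtain ⟨s₀, hs₀⟩ := h2
    have := riccati_unique a b c ha hb z z₂ hz hz₂ s₀ hs₀
    intro s; rw [this (s + T), this s, hz₂T s]
  by_cases h3 : ∃ s₀, z s₀ = z₃ s₀
  · obtain ⟨s₀, hs₀⟩ := h3
    have := riccati_unique a b c ha hb z z₃ hz hz₃ s₀ hs₀
    intro s; rw [this (s + T), this s, hz₃T s]
  push_neg at h1 h2 h3
  -- Cross-ratio argument.
  set N : ℝ → ℝ := fun s => (z s - z₁ s) * (z₃ s - z₂ s) with hNdef
  set D : ℝ → ℝ := fun s => (z s - z₂ s) * (z₃ s - z₁ s) with hDdef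
  have hDne : ∀ s, D s ≠ 0 := by
    intro s
    exact mul_ne_zero (sub_ne_zero.2 (h2 s)) (sub_ne_zero.2 (hdist s).2.1.symm)
  set φ : ℝ → ℝ := fun s => a s * (z s + z₁ s) + b s + (a s * (z₃ s + z₂ s) + b s) with hφdef
  have hN : ∀ s, HasDerivAt N (φ s * N s) s := by
    intro s
    have := ((hz s).sub (hz₁ s)).mul ((hz₃ s).sub (hz₂ s))
    refine this.congr_deriv ?_
    simp only [hφdef, hNdef, Pi.sub_apply]
    ring
  have hD : ∀ s, HasDerivAt D (φ s * D s) s := by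
    intro s
    have := ((hz s).sub (hz₂ s)).mul ((hz₃ s).sub (hz₁ s))
    refine this.congr_deriv ?_
    simp only [hφdef, hDdef, Pi.sub_apply]
    ring
  have hQ : ∀ s, HasDerivAt (fun s => N s / D s) 0 s := by
    intro s
    have := (hN s).div (hD s) (hDne s)
    refine this.congr_deriv ?_
    rw [div_eq_zero_iff]
    left; ring
  have hQconst : ∀ s t : ℝ, N s / D s = N t / D t :=
    fun s t => is_const_of_deriv_eq_zero (fun x => (hQ x).differentiableAt)
      (fun x => (hQ x).deriv) s t
  intro s
  have hcr := hQconst (s + T) s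
  have hNT : N (s + T) = (z (s + T) - z₁ s) * (z₃ s - z₂ s) := by
    simp only [hNdef, hz₁T, hz₂T, hz₃T]
  have hDT : D (s + T) = (z (s + T) - z₂ s) * (z₃ s - z₁ s) := by
    simp only [hDdef, hz₁T, hz₂T, hz₃T]
  have hmul : N (s + T) * D s = N s * D (s + T) :=
    div_eq_div_iff (hDne (s + T)) (hDne s) |>.1 hcr
  rw [hNT, hDT] at hmul
  simp only [hNdef, hDdef] at hmul
  set x := z (s + T)
  set y := z s
  have h12 : z₁ s - z₂ s ≠ 0 := sub_ne_zero.2 (hdist s).1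
  have h31 : z₃ s - z₁ s ≠ 0 := sub_ne_zero.2 (hdist s).2.1.symm
  have h32 : z₃ s - z₂ s ≠ 0 := sub_ne_zero.2 (hdist s).2.2.symm
  have hkey : (z₁ s - z₂ s) * (x - y) * ((z₃ s - z₁ s) * (z₃ s - z₂ s)) = 0 := by
    nlinarith [hmul]
  rcases mul_eq_zero.1 hkey with h' | h'
  · rcases mul_eq_zero.1 h' with h'' | h''
    · exact absurd h'' h12
    · linarith [h'']
  · rcases mul_eq_zero.1 h' with h'' | h''
    · exact absurd h'' h31
    · exact absurd h'' h32
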